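/- Let P be a finite poset whose elements of crossing number one form a saturated chain c_1 < ... < c_k (k ≥ 1), with all other elements having crossing number zero. Then: exactly two elements cover c_k, exactly two elements are covered by c_1, each c_i with i < k is covered by exactly one element (namely c_{i+1}), and each c_i with i > 1 covers exactly one element (namely c_{i-1}). -/

import Mathlib

open Classical

variable {α : Type*}

/-- A saturated chain from `v` up to a maximal element: a list `v = v₀ ⋖ v₁ ⋖ … ⋖ vₖ`
with `vₖ` maximal. -/
def UpChain [PartialOrder α] (v : α) (l : List α) : Prop :=
  l.Chain' (· ⋖ ·) ∧ l.head? = some v ∧ ∃ m, l.getLast? = some m ∧ IsMax m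

/-- A saturated chain from a minimal element up to `v`. -/
def DownChain [PartialOrder α] (v : α) (l : List α) : Prop :=
  l.Chain' (· ⋖ ·) ∧ (∃ m, l.head? = some m ∧ IsMin m) ∧ l.getLast? = some v

/-- `uc v` : the number of saturated chains from `v` up to a maximal element. -/
noncomputable def uc [PartialOrder α] (v : α) : ℕ := Nat.card {l : List α // UpChain v l}

/-- `dc v` : the number of saturated chains from `v` down to a minimal element. -/
noncomputable def dc [PartialOrder α] (v : α) : ℕ := Nat.card {l : List α // DownChain v l}

/-- A maximal chain: a saturated chain from a minimal element to a maximal element. -/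
def IsMaxChainList [PartialOrder α] (l : List α) : Prop :=
  l.Chain' (· ⋖ ·) ∧ (∃ m, l.head? = some m ∧ IsMin m) ∧ ∃ m, l.getLast? = some m ∧ IsMax m

/-- `c(P)`: the number of maximal chains. -/
noncomputable def numMaxChains (α : Type*) [PartialOrder α] : ℕ :=
  Nat.card {l : List α // IsMaxChainList l}

/-- `max(P)`: the number of maximal elements. -/
noncomputable def numMax (α : Type*) [PartialOrder α] : ℕ := Nat.card {v : α // IsMax v}

/-- `min(P)`: the number of minimal elements. -/
noncomputable def numMin (α : Type*) [PartialOrder α] : ℕ := Nat.card {v : α // IsMin v}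

/-- `edges(P)`: the number of cover relations (edges of the Hasse diagram). -/
noncomputable def numEdges (α : Type*) [PartialOrder α] : ℕ :=
  Nat.card {p : α × α // p.1 ⋖ p.2}

/-- `gap(P) = c(P) + |P| - (max(P) + min(P) + edges(P))`. -/
noncomputable def gap (α : Type*) [PartialOrder α] : ℤ :=
  (numMaxChains α : ℤ) + Nat.card α - ((numMax α : ℤ) + numMin α + numEdges α)

/-- The crossing number `(uc(v)-1)(dc(v)-1)` of `v`. -/
noncomputable def crossingNumber [PartialOrder α] (v : α) : ℕ := (uc v - 1) * (dc v - 1)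

/-- `c` is the center of an X-shaped subposet: there are `a, b < c < d, e`
with `a ∥ b` and `d ∥ e`. -/
def IsXCenter [PartialOrder α] (c : α) : Prop :=
  ∃ a b d e : α, a < c ∧ b < c ∧ c < d ∧ c < e ∧
    ¬ a ≤ b ∧ ¬ b ≤ a ∧ ¬ d ≤ e ∧ ¬ e ≤ d

/-- `P` contains an X-shaped subposet. -/
def HasX (α : Type*) [PartialOrder α] : Prop := ∃ c : α, IsXCenter c


section CrossingHelpers

variable {α : Type*} [Fintype α] [PartialOrder α]

private lemma getLast?_cons_of_ne_nil {α : Type*} {t : List α} (h : t ≠ []) (a : α) :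
    (a :: t).getLast? = t.getLast? := by
  obtain ⟨c, t', rfl⟩ := List.exists_cons_of_ne_nil h
  simp

private lemma UpChain.cons {u : α} {t : List α} (h : UpChain u t) {v : α} (hv : v ⋖ u) :
    UpChain v (v :: t) := by
  obtain ⟨hc, hh, m, hm, hmax⟩ := h
  refine ⟨?_, rfl, m, ?_, hmax⟩
  · rw [List.Chain', List.isChain_cons]
    refine ⟨fun b hb => ?_, hc⟩
    rw [hh] at hb
    obtain rfl : u = b := by simpa using hb
    exact hv
  · rw [getLast?_cons_of_ne_nil (t := t) (fun hl => by simp [hl] at hh) v, hm]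

private lemma upChain_cons_decomp {v : α} {l : List α} (h : UpChain v l) (hv : ¬ IsMax v) :
    ∃ (u : α) (t : List α), l = v :: t ∧ v ⋖ u ∧ UpChain u t := by
  obtain ⟨hc, hh, m, hm, hmax⟩ := h
  obtain ⟨a, t, rfl⟩ := List.exists_cons_of_ne_nil (l := l) (fun hl => by simp [hl] at hh)
  obtain rfl : a = v := by simpa using hh
  obtain ⟨b, t', rfl⟩ : ∃ b t', t = b :: t' := by
    rcases t with _ | ⟨b, t'⟩
    · exfalso
      obtain rfl : a = m := by simpa using hm
      exact hv hmax
    · exact ⟨b, t', rfl⟩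
  rw [List.Chain', List.isChain_cons_cons] at hc
  refine ⟨b, b :: t', rfl, hc.1, hc.2, rfl, m, ?_, hmax⟩
  simpa using hm

private lemma finite_upChain (v : α) : Finite {l : List α // UpChain v l} := by
  have hsub : {l : List α | UpChain v l} ⊆ {l : List α | l.length ≤ Fintype.card α} := by
    intro l hl
    have hlt : l.Chain' (· < ·) := hl.1.imp fun a b hab => hab.lt
    have hnd : l.Nodup := List.Pairwise.imp ne_of_lt (List.isChain_iff_pairwise.mp hlt)
    exact hnd.length_le_card
  exact ((List.finite_length_le α (Fintype.card α)).subset hsub).to_subtype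

private lemma exists_upChain (v : α) : ∃ l, UpChain v l := by
  have wf : WellFounded ((· > ·) : α → α → Prop) := wellFounded_gt
  refine wf.induction (C := fun x => ∃ l, UpChain x l) v ?_
  intro x IH
  by_cases hx : IsMax x
  · exact ⟨[x], List.isChain_singleton x, rfl, x, rfl, hx⟩
  · obtain ⟨u, hu⟩ := not_isMax_iff.mp hx
    obtain ⟨w, hxw, _⟩ := hu.exists_covby_le
    obtain ⟨t, ht⟩ := IH w hxw.lt
    exact ⟨x :: t, ht.cons hxw⟩

private lemma uc_pos (v : α) : 1 ≤ uc v := by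
  have hfin := finite_upChain v
  have hne : Nonempty {l : List α // UpChain v l} := by
    obtain ⟨l, hl⟩ := exists_upChain v
    exact ⟨⟨l, hl⟩⟩
  have := Nat.card_pos (α := {l : List α // UpChain v l})
  rw [uc]; omega

private lemma uc_isMax {v : α} (h : IsMax v) : uc v = 1 := by
  have huniq : ∀ m : List α, UpChain v m → m = [v] := by
    intro m hm
    obtain ⟨hc, hh, _⟩ := hm
    obtain ⟨a, t, rfl⟩ := List.exists_cons_of_ne_nil (l := m) (fun hl => by simp [hl] at hh)
    obtain rfl : a = v := by simpa using hh
    rcases t with _ | ⟨b, t'⟩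
    · rfl
    · exfalso
      rw [List.Chain', List.isChain_cons_cons] at hc
      exact hc.1.lt.not_ge (h hc.1.lt.le)
  rw [uc, Nat.card_eq_one_iff_unique]
  constructor
  · constructor
    rintro ⟨m1, h1⟩ ⟨m2, h2⟩
    apply Subtype.ext
    show m1 = m2
    rw [huniq m1 h1, huniq m2 h2]
  · exact ⟨⟨[v], List.isChain_singleton v, rfl, v, rfl, h⟩⟩

private lemma uc_rec {v : α} (hv : ¬ IsMax v) :
    uc v = ∑ u : {u : α // v ⋖ u}, uc u.1 := by
  haveI : ∀ u : α, Finite {l : List α // UpChain u l} := finite_upChain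
  haveI hF : ∀ u : α, Fintype {l : List α // UpChain u l} := fun u => Fintype.ofFinite _
  have hbij : Function.Bijective
      (fun p : (Σ u : {u : α // v ⋖ u}, {l : List α // UpChain u.1 l}) =>
        (⟨v :: p.2.1, p.2.2.cons p.1.2⟩ : {l : List α // UpChain v l})) := by
    constructor
    · rintro ⟨⟨u, hu⟩, ⟨t, ht⟩⟩ ⟨⟨u', hu'⟩, ⟨t', ht'⟩⟩ heq
      simp only [Subtype.mk.injEq, List.cons.injEq, true_and] at heq
      subst heq
      obtain rfl : u = u' := by
        have h1 := ht.2.1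
        have h2 := ht'.2.1
        rw [h1] at h2
        exact Option.some_inj.mp h2
      rfl
    · rintro ⟨l, hl⟩
      obtain ⟨u, t, rfl, huv, ht⟩ := upChain_cons_decomp hl hv
      exact ⟨⟨⟨u, huv⟩, ⟨t, ht⟩⟩, rfl⟩
  calc uc v = Nat.card (Σ u : {u : α // v ⋖ u}, {l : List α // UpChain u.1 l}) :=
        (Nat.card_eq_of_bijective _ hbij).symm
    _ = ∑ u : {u : α // v ⋖ u}, uc u.1 := by
        rw [Nat.card_eq_fintype_card, Fintype.card_sigma]
        refine Finset.sum_congr rfl fun u _ => ?_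
        rw [uc, Nat.card_eq_fintype_card]

private lemma downChain_iff {v : α} {l : List α} :
    DownChain v l ↔ UpChain (OrderDual.toDual v) ((l.reverse).map OrderDual.toDual) := by
  constructor
  · rintro ⟨hc, ⟨m, hm, hmin⟩, hlast⟩
    refine ⟨?_, ?_, OrderDual.toDual m, ?_, hmin.toDual⟩
    · rw [List.Chain', List.isChain_map, List.isChain_reverse]
      exact hc.imp fun a b hab => toDual_covBy_toDual_iff.mpr hab
    · rw [List.head?_map, List.head?_reverse, hlast]
      rfl
    · rw [List.getLast?_map, List.getLast?_reverse, hm]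
      rfl
  · rintro ⟨hc, hh, m, hm, hmax⟩
    rw [List.Chain', List.isChain_map, List.isChain_reverse] at hc
    rw [List.head?_map, List.head?_reverse] at hh
    rw [List.getLast?_map, List.getLast?_reverse] at hm
    obtain ⟨v', hv', hv'e⟩ := Option.map_eq_some_iff.mp hh
    obtain ⟨m', hm', hm'e⟩ := Option.map_eq_some_iff.mp hm
    obtain rfl : v' = v := OrderDual.toDual.injective hv'e
    refine ⟨hc.imp fun a b hab => toDual_covBy_toDual_iff.mp hab, ⟨m', hm', ?_⟩, hv'⟩
    rw [← isMax_toDual_iff, hm'e]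
    exact hmax

private lemma dc_eq_uc_dual (v : α) : dc v = uc (OrderDual.toDual v) := by
  rw [dc, uc]
  refine Nat.card_congr ⟨
    fun p => ⟨(p.1.reverse).map OrderDual.toDual, downChain_iff.mp p.2⟩,
    fun p => ⟨(p.1.map OrderDual.ofDual).reverse, ?_⟩, ?_, ?_⟩
  · rw [downChain_iff]
    convert p.2 using 2
    simp [List.map_map, Function.comp_def]
  · rintro ⟨l, hl⟩
    apply Subtype.ext
    simp [List.map_map, Function.comp_def]
  · rintro ⟨l, hl⟩
    apply Subtype.ext
    simp [List.map_map, Function.comp_def]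

private lemma dc_pos (v : α) : 1 ≤ dc v := by
  rw [dc_eq_uc_dual]; exact uc_pos _

private lemma dc_isMin {v : α} (h : IsMin v) : dc v = 1 := by
  rw [dc_eq_uc_dual]; exact uc_isMax h.toDual

private lemma dc_rec {v : α} (hv : ¬ IsMin v) :
    dc v = ∑ d : {d : α // d ⋖ v}, dc d.1 := by
  rw [dc_eq_uc_dual, uc_rec (fun hm => hv (isMax_toDual_iff.mp hm))]
  refine Fintype.sum_equiv
    (Equiv.subtypeEquiv OrderDual.ofDual (fun u => ?_)) _ _ (fun u => ?_)
  · exact toDual_covBy_toDual_iff (a := OrderDual.ofDual u) (b := v)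
  · exact (dc_eq_uc_dual (OrderDual.ofDual u.1)).symm

end CrossingHelpers


theorem crossing_chain_covers (α : Type*) [Fintype α] [PartialOrder α] (l : List α) (hne : l ≠ [])
    (hchain : l.Chain' (· ⋖ ·))
    (hone : ∀ v ∈ l, crossingNumber v = 1)
    (hzero : ∀ v : α, v ∉ l → crossingNumber v = 0) :
    Nat.card {u : α // l.getLast hne ⋖ u} = 2 ∧
    Nat.card {d : α // d ⋖ l.head hne} = 2 ∧
    (∀ (i : ℕ) (h : i + 1 < l.length), ∀ x : α,
      l.get ⟨i, Nat.lt_of_succ_lt h⟩ ⋖ x → x = l.get ⟨i + 1, h⟩) ∧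
    (∀ (i : ℕ) (h : i + 1 < l.length), ∀ x : α,
      x ⋖ l.get ⟨i + 1, h⟩ → x = l.get ⟨i, Nat.lt_of_succ_lt h⟩) := by
  classical
  have hmem2 : ∀ v ∈ l, uc v = 2 ∧ dc v = 2 := by
    intro v hv
    have h1 := hone v hv
    rw [crossingNumber] at h1
    have ha := Nat.eq_one_of_mul_eq_one_right h1
    have hb := Nat.eq_one_of_mul_eq_one_left h1
    have hu := uc_pos v
    have hd := dc_pos v
    omega
  have hpair : l.Pairwise (· < ·) :=
    List.isChain_iff_pairwise.mp (hchain.imp fun a b hab => hab.lt)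
  have hget : ∀ (i j : ℕ) (hi : i < l.length) (hj : j < l.length), i < j →
      l.get ⟨i, hi⟩ < l.get ⟨j, hj⟩ := by
    intro i j hi hj hij
    exact List.pairwise_iff_getElem.mp hpair i j hi hj hij
  have hle_last : ∀ x ∈ l, x ≤ l.getLast hne := by
    intro x hx
    obtain ⟨⟨i, hi⟩, rfl⟩ := List.mem_iff_get.mp hx
    rw [List.getLast_eq_getElem]
    rcases Nat.lt_or_ge i (l.length - 1) with h | h
    · exact (hget i (l.length - 1) hi (by omega) h).le
    · have hieq : i = l.length - 1 := by omega
      subst hieq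
      exact le_rfl
  have hhead_le : ∀ x ∈ l, l.head hne ≤ x := by
    intro x hx
    obtain ⟨⟨i, hi⟩, rfl⟩ := List.mem_iff_get.mp hx
    have h0 : l.head hne = l.get ⟨0, by omega⟩ := by
      rw [List.head_eq_getElem]
      rfl
    rcases Nat.eq_zero_or_pos i with rfl | hipos
    · rw [h0]
    · rw [h0]
      exact (hget 0 i (by omega) hi hipos).le
  have key_up : ∀ v ∈ l, ∀ u : α, v ⋖ u → u ∉ l → uc u = 1 := by
    intro v hv u hvu hul
    have hnotmin : ¬ IsMin u := fun hm => (show u ≤ v from hm hvu.le).not_gt hvu.lt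
    have hdc : 2 ≤ dc u := by
      rw [dc_rec hnotmin]
      have hdv : dc v = 2 := (hmem2 v hv).2
      have h2 : dc v ≤ ∑ d : {d : α // d ⋖ u}, dc d.1 :=
        Finset.single_le_sum (f := fun d : {d : α // d ⋖ u} => dc d.1)
          (fun i _ => Nat.zero_le _) (Finset.mem_univ ⟨v, hvu⟩)
      omega
    have h0 := hzero u hul
    rw [crossingNumber] at h0
    have h1 := uc_pos u
    rcases Nat.mul_eq_zero.mp h0 with hcase | hcase <;> omega
  have key_down : ∀ v ∈ l, ∀ d : α, d ⋖ v → d ∉ l → dc d = 1 := by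
    intro v hv d hdv hdl
    have hnotmax : ¬ IsMax d := fun hm => (show v ≤ d from hm hdv.le).not_gt hdv.lt
    have huc : 2 ≤ uc d := by
      rw [uc_rec hnotmax]
      have hucv : uc v = 2 := (hmem2 v hv).1
      have h2 : uc v ≤ ∑ u : {u : α // d ⋖ u}, uc u.1 :=
        Finset.single_le_sum (f := fun u : {u : α // d ⋖ u} => uc u.1)
          (fun i _ => Nat.zero_le _) (Finset.mem_univ ⟨v, hdv⟩)
      omega
    have h0 := hzero d hdl
    rw [crossingNumber] at h0
    have h1 := dc_pos d
    rcases Nat.mul_eq_zero.mp h0 with hcase | hcase <;> omega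
  refine ⟨?_, ?_, ?_, ?_⟩
  · -- exactly two elements cover the last element
    have hcl : l.getLast hne ∈ l := List.getLast_mem hne
    have huc2 : uc (l.getLast hne) = 2 := (hmem2 _ hcl).1
    have hnm : ¬ IsMax (l.getLast hne) := fun hm => by
      have := uc_isMax hm; omega
    have hrec := uc_rec hnm
    have hones : ∀ u : {u : α // l.getLast hne ⋖ u}, uc u.1 = 1 := by
      rintro ⟨u, hu⟩
      exact key_up _ hcl u hu fun hmem => (show l.getLast hne < u from hu.lt).not_ge (hle_last u hmem)
    rw [Finset.sum_congr rfl (fun u _ => hones u)] at hrec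
    simp only [Finset.sum_const, smul_eq_mul, mul_one, Finset.card_univ] at hrec
    rw [Nat.card_eq_fintype_card]
    omega
  · -- exactly two elements are covered by the head
    have hcl : l.head hne ∈ l := List.head_mem hne
    have hdc2 : dc (l.head hne) = 2 := (hmem2 _ hcl).2
    have hnm : ¬ IsMin (l.head hne) := fun hm => by
      have := dc_isMin hm; omega
    have hrec := dc_rec hnm
    have hones : ∀ d : {d : α // d ⋖ l.head hne}, dc d.1 = 1 := by
      rintro ⟨d, hd⟩
      exact key_down _ hcl d hd fun hmem => (show d < l.head hne from hd.lt).not_ge (hhead_le d hmem)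
    rw [Finset.sum_congr rfl (fun d _ => hones d)] at hrec
    simp only [Finset.sum_const, smul_eq_mul, mul_one, Finset.card_univ] at hrec
    rw [Nat.card_eq_fintype_card]
    omega
  · -- unique cover in the middle
    intro i h x hx
    by_contra hxw
    have hvw : l.get ⟨i, Nat.lt_of_succ_lt h⟩ ⋖ l.get ⟨i + 1, h⟩ :=
      List.isChain_iff_getElem.mp hchain i (by omega)
    have hv2 : uc (l.get ⟨i, Nat.lt_of_succ_lt h⟩) = 2 :=
      (hmem2 _ (l.get_mem _)).1
    have hw2 : uc (l.get ⟨i + 1, h⟩) = 2 := (hmem2 _ (l.get_mem _)).1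
    have hnm : ¬ IsMax (l.get ⟨i, Nat.lt_of_succ_lt h⟩) := fun hm => by
      have := uc_isMax hm; omega
    have hrec := uc_rec hnm
    have hsum := Finset.sum_le_sum_of_subset
      (Finset.subset_univ
        ({⟨l.get ⟨i + 1, h⟩, hvw⟩, ⟨x, hx⟩} :
          Finset {u : α // l.get ⟨i, Nat.lt_of_succ_lt h⟩ ⋖ u}))
      (f := fun u : {u : α // l.get ⟨i, Nat.lt_of_succ_lt h⟩ ⋖ u} => uc u.1)
    rw [Finset.sum_pair (fun hEq => hxw (congrArg Subtype.val hEq).symm)] at hsum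
    have hsum' : uc (l.get ⟨i + 1, h⟩) + uc x ≤
        ∑ u : {u : α // l.get ⟨i, Nat.lt_of_succ_lt h⟩ ⋖ u}, uc u.1 := hsum
    have hx1 := uc_pos x
    omega
  · -- unique covered element in the middle
    intro i h x hx
    by_contra hxv
    have hvw : l.get ⟨i, Nat.lt_of_succ_lt h⟩ ⋖ l.get ⟨i + 1, h⟩ :=
      List.isChain_iff_getElem.mp hchain i (by omega)
    have hv2 : dc (l.get ⟨i, Nat.lt_of_succ_lt h⟩) = 2 :=
      (hmem2 _ (l.get_mem _)).2
    have hw2 : dc (l.get ⟨i + 1, h⟩) = 2 := (hmem2 _ (l.get_mem _)).2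
    have hnm : ¬ IsMin (l.get ⟨i + 1, h⟩) := fun hm => by
      have := dc_isMin hm; omega
    have hrec := dc_rec hnm
    have hsum := Finset.sum_le_sum_of_subset
      (Finset.subset_univ
        ({⟨l.get ⟨i, Nat.lt_of_succ_lt h⟩, hvw⟩, ⟨x, hx⟩} :
          Finset {d : α // d ⋖ l.get ⟨i + 1, h⟩}))
      (f := fun d : {d : α // d ⋖ l.get ⟨i + 1, h⟩} => dc d.1)
    rw [Finset.sum_pair (fun hEq => hxv (congrArg Subtype.val hEq).symm)] at hsum
    have hsum' : dc (l.get ⟨i, Nat.lt_of_succ_lt h⟩) + dc x ≤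
        ∑ d : {d : α // d ⋖ l.get ⟨i + 1, h⟩}, dc d.1 := hsum
    have hx1 := dc_pos x
    omega
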